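/- Let A ⊆ ℝ be an open invex set with respect to η satisfying Condition C, and a, b ∈ A with a < a + η(b,a), f : A → ℝ differentiable with f′ integrable and |f′| preinvex on A. Then for every α > 0: |(f(a)+f(a+η(b,a)))/2 − (Γ(α+1)/(2 η(b,a)^α))[J_{a+}^α f(a+η(b,a)) + J_{(a+η(b,a))−}^α f(a)]| ≤ (η(b,a)/(2(α+1))) (1 − 1/2^α) (|f′(a)| + |f′(a+η(b,a))|). -/

import Mathlib

open MeasureTheory intervalIntegral

/-- Riemann-Liouville left fractional integral `J_{a+}^α f(x)`. -/
noncomputable def JL (α a x : ℝ) (f : ℝ → ℝ) : ℝ :=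
  (1 / Real.Gamma α) * ∫ t in a..x, (x - t) ^ (α - 1) * f t

/-- Riemann-Liouville right fractional integral `J_{b-}^α f(x)`. -/
noncomputable def JR (α x b : ℝ) (f : ℝ → ℝ) : ℝ :=
  (1 / Real.Gamma α) * ∫ t in x..b, (t - x) ^ (α - 1) * f t

/-- `A` is invex with respect to `η`. -/
def InvexSet (A : Set ℝ) (η : ℝ → ℝ → ℝ) : Prop :=
  ∀ x ∈ A, ∀ y ∈ A, ∀ t ∈ Set.Icc (0:ℝ) 1, x + t * η y x ∈ A

/-- `f` is preinvex with respect to `η` on `A`. -/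
def PreinvexOn (A : Set ℝ) (η : ℝ → ℝ → ℝ) (f : ℝ → ℝ) : Prop :=
  ∀ x ∈ A, ∀ y ∈ A, ∀ t ∈ Set.Icc (0:ℝ) 1,
    f (x + t * η y x) ≤ (1 - t) * f x + t * f y

/-- Condition C of Mohan and Neogy. -/
def CondC (A : Set ℝ) (η : ℝ → ℝ → ℝ) : Prop :=
  ∀ x ∈ A, ∀ y ∈ A, ∀ t ∈ Set.Icc (0:ℝ) 1,
    η y (y + t * η x y) = -t * η x y ∧ η x (y + t * η x y) = (1 - t) * η x y

section AuxLemmas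
open Set

lemma aux_mem_Icc {a h t : ℝ} (hh : 0 < h) (ht : t ∈ Icc (0:ℝ) 1) :
    a + t * h ∈ Icc a (a + h) := by
  constructor <;> nlinarith [ht.1, ht.2]

lemma aux_contOn {a h : ℝ} {f : ℝ → ℝ} (hh : 0 < h)
    (hd : ∀ x ∈ Icc a (a + h), DifferentiableAt ℝ f x) :
    ContinuousOn (fun t => f (a + t * h)) (Icc (0:ℝ) 1) := by
  intro t ht
  have hca : ContinuousAt (f ∘ fun t : ℝ => a + t * h) t :=
    ContinuousAt.comp (hd _ (aux_mem_Icc hh ht)).continuousAt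
      ((by continuity : Continuous fun t : ℝ => a + t * h).continuousAt)
  exact hca.continuousWithinAt

lemma aux_int_deriv {a h : ℝ} {g : ℝ → ℝ} (hh : 0 < h)
    (hint : IntervalIntegrable g volume a (a + h)) :
    IntervalIntegrable (fun t => g (a + t * h)) volume 0 1 := by
  have h1 := hint.comp_add_right a
  have h2 := h1.comp_mul_right (c := h)
  have e0 : (a - a) / h = (0:ℝ) := by field_simp; ring
  have e1 : (a + h - a) / h = (1:ℝ) := by field_simp; ring
  rw [e0, e1] at h2
  simpa [add_comm, mul_comm] using h2

lemma aux_int_rpow {r : ℝ} (hr : -1 < r) :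
    IntervalIntegrable (fun t : ℝ => (1 - t) ^ r) volume 0 1 := by
  have := (intervalIntegrable_rpow' (a := 0) (b := 1) hr).comp_sub_left 1
  simpa using this.symm

lemma aux_identity {a h α : ℝ} {f : ℝ → ℝ} (hh : 0 < h) (hα : 0 < α)
    (hd : ∀ x ∈ Icc a (a + h), DifferentiableAt ℝ f x)
    (hint : IntervalIntegrable (deriv f) volume a (a + h)) :
    α * ((∫ t in (0:ℝ)..1, (1 - t) ^ (α - 1) * f (a + t * h)) +
         (∫ t in (0:ℝ)..1, t ^ (α - 1) * f (a + t * h))) =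
      f a + f (a + h) +
        h * ∫ t in (0:ℝ)..1, ((1 - t) ^ α - t ^ α) * deriv f (a + t * h) := by
  set g : ℝ → ℝ := fun t => ((1 - t) ^ α - t ^ α) * f (a + t * h) with hg
  set G : ℝ → ℝ := fun t =>
    (-α) * ((1 - t) ^ (α - 1) * f (a + t * h)) + (-α) * (t ^ (α - 1) * f (a + t * h)) +
      h * (((1 - t) ^ α - t ^ α) * deriv f (a + t * h)) with hG
  have hcf : ContinuousOn (fun t => f (a + t * h)) (Icc (0:ℝ) 1) := aux_contOn hh hd
  have hcf' : ContinuousOn (fun t => f (a + t * h)) (Set.uIcc (0:ℝ) 1) := by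
    rwa [uIcc_of_le zero_le_one]
  have hcw : Continuous (fun t : ℝ => (1 - t) ^ α - t ^ α) := by
    exact ((Real.continuous_rpow_const hα.le).comp (continuous_const.sub continuous_id)).sub
      (Real.continuous_rpow_const hα.le)
  have hcg : ContinuousOn g (Icc (0:ℝ) 1) := hcw.continuousOn.mul hcf
  have hderiv : ∀ t ∈ Ioo (0:ℝ) 1, HasDerivWithinAt g (G t) (Ioi t) t := by
    intro t ht
    have ht0 : t ≠ 0 := ne_of_gt ht.1
    have ht1 : (1:ℝ) - t ≠ 0 := by have := ht.2; intro hcon; linarith [sub_eq_zero.mp hcon]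
    have h1 : HasDerivAt (fun t : ℝ => (1 - t) ^ α) ((-1) * α * (1 - t) ^ (α - 1)) t :=
      (HasDerivAt.const_sub 1 (hasDerivAt_id t)).rpow_const (Or.inl ht1)
    have h2 : HasDerivAt (fun t : ℝ => t ^ α) (1 * α * t ^ (α - 1)) t :=
      (hasDerivAt_id t).rpow_const (Or.inl ht0)
    have haff : HasDerivAt (fun t : ℝ => a + t * h) h t := by
      simpa using ((hasDerivAt_id t).mul_const h).const_add a
    have h3 : HasDerivAt (fun t => f (a + t * h)) (deriv f (a + t * h) * h) t := by
      have := ((hd _ (aux_mem_Icc hh (Ioo_subset_Icc_self ht))).hasDerivAt).comp t haff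
      exact this
    have hmul := (h1.sub h2).mul h3
    apply HasDerivAt.hasDerivWithinAt
    refine hmul.congr_deriv ?_
    simp only [hG, Pi.sub_apply]
    ring
  have hIP : IntervalIntegrable (fun t => (1 - t) ^ (α - 1) * f (a + t * h)) volume 0 1 :=
    (aux_int_rpow (by linarith)).mul_continuousOn hcf'
  have hIQ : IntervalIntegrable (fun t => t ^ (α - 1) * f (a + t * h)) volume 0 1 :=
    (intervalIntegrable_rpow' (by linarith)).mul_continuousOn hcf'
  have hIR : IntervalIntegrable (fun t => ((1 - t) ^ α - t ^ α) * deriv f (a + t * h)) volume 0 1 :=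
    (aux_int_deriv hh hint).continuousOn_mul (hcw.continuousOn)
  have hGint : IntervalIntegrable G volume 0 1 := by
    rw [hG]
    exact ((hIP.const_mul (-α)).add (hIQ.const_mul (-α))).add (hIR.const_mul h)
  have key : ∫ t in (0:ℝ)..1, G t = g 1 - g 0 :=
    integral_eq_sub_of_hasDeriv_right_of_le zero_le_one hcg hderiv hGint
  have hg1 : g 1 = -f (a + h) := by
    simp [hg, Real.zero_rpow hα.ne', Real.one_rpow]
  have hg0 : g 0 = f a := by
    simp [hg, Real.zero_rpow hα.ne', Real.one_rpow]
  have hsplit : ∫ t in (0:ℝ)..1, G t =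
      (-α) * (∫ t in (0:ℝ)..1, (1 - t) ^ (α - 1) * f (a + t * h)) +
      (-α) * (∫ t in (0:ℝ)..1, t ^ (α - 1) * f (a + t * h)) +
      h * ∫ t in (0:ℝ)..1, ((1 - t) ^ α - t ^ α) * deriv f (a + t * h) := by
    rw [hG, integral_add ((hIP.const_mul (-α)).add (hIQ.const_mul (-α))) (hIR.const_mul h),
      integral_add (hIP.const_mul (-α)) (hIQ.const_mul (-α)),
      intervalIntegral.integral_const_mul, intervalIntegral.integral_const_mul, intervalIntegral.integral_const_mul]
  rw [hsplit, hg1, hg0] at key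
  linarith [key]

lemma aux_subst_left {a h α : ℝ} (f : ℝ → ℝ) (hh : 0 < h) (hα : 0 < α) :
    ∫ s in a..(a + h), ((a + h) - s) ^ (α - 1) * f s =
      h ^ α * ∫ t in (0:ℝ)..1, (1 - t) ^ (α - 1) * f (a + t * h) := by
  have hs := integral_comp_add_mul (a := 0) (b := 1)
    (fun s => ((a + h) - s) ^ (α - 1) * f s) (ne_of_gt hh) a
  have e : a + h * (0:ℝ) = a := by ring
  have e1 : a + h * (1:ℝ) = a + h := by ring
  rw [e, e1] at hs
  have hpow : h ^ α = h ^ (α - 1) * h := by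
    rw [← Real.rpow_add_one (ne_of_gt hh) (α - 1)]
    norm_num
  have hcongr : ∫ t in (0:ℝ)..1, (a + h - (a + h * t)) ^ (α - 1) * f (a + h * t) =
      ∫ t in (0:ℝ)..1, h ^ (α - 1) * ((1 - t) ^ (α - 1) * f (a + t * h)) := by
    apply integral_congr
    intro t ht
    rw [uIcc_of_le zero_le_one] at ht
    have h1t : (0:ℝ) ≤ 1 - t := by linarith [ht.2]
    show (a + h - (a + h * t)) ^ (α - 1) * f (a + h * t) =
      h ^ (α - 1) * ((1 - t) ^ (α - 1) * f (a + t * h))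
    have : a + h - (a + h * t) = h * (1 - t) := by ring
    rw [this, Real.mul_rpow hh.le h1t, mul_comm t h]
    ring
  rw [hcongr, intervalIntegral.integral_const_mul] at hs
  rw [smul_eq_mul] at hs
  have := hs.symm
  field_simp at this ⊢
  rw [hpow]
  nlinarith [this]

lemma aux_subst_right {a h α : ℝ} (f : ℝ → ℝ) (hh : 0 < h) (hα : 0 < α) :
    ∫ s in a..(a + h), (s - a) ^ (α - 1) * f s =
      h ^ α * ∫ t in (0:ℝ)..1, t ^ (α - 1) * f (a + t * h) := by
  have hs := integral_comp_add_mul (a := 0) (b := 1)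
    (fun s => (s - a) ^ (α - 1) * f s) (ne_of_gt hh) a
  have e : a + h * (0:ℝ) = a := by ring
  have e1 : a + h * (1:ℝ) = a + h := by ring
  rw [e, e1] at hs
  have hpow : h ^ α = h ^ (α - 1) * h := by
    rw [← Real.rpow_add_one (ne_of_gt hh) (α - 1)]
    norm_num
  have hcongr : ∫ t in (0:ℝ)..1, ((a + h * t) - a) ^ (α - 1) * f (a + h * t) =
      ∫ t in (0:ℝ)..1, h ^ (α - 1) * (t ^ (α - 1) * f (a + t * h)) := by
    apply integral_congr
    intro t ht
    rw [uIcc_of_le zero_le_one] at ht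
    show ((a + h * t) - a) ^ (α - 1) * f (a + h * t) =
      h ^ (α - 1) * (t ^ (α - 1) * f (a + t * h))
    have : (a + h * t) - a = h * t := by ring
    rw [this, Real.mul_rpow hh.le ht.1, mul_comm t h]
    ring
  rw [hcongr, intervalIntegral.integral_const_mul] at hs
  rw [smul_eq_mul] at hs
  have := hs.symm
  field_simp at this ⊢
  rw [hpow]
  nlinarith [this]

lemma aux_cont_w {α : ℝ} (hα : 0 < α) :
    Continuous (fun t : ℝ => (1 - t) ^ α - t ^ α) :=
  ((Real.continuous_rpow_const hα.le).comp (continuous_const.sub continuous_id)).sub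
    (Real.continuous_rpow_const hα.le)

lemma aux_K {α : ℝ} (hα : 0 < α) :
    ∫ t in (0:ℝ)..1, |(1 - t) ^ α - t ^ α| = 2 / (α + 1) * (1 - (1/2:ℝ) ^ α) := by
  have hcw := aux_cont_w hα
  have hI : ∀ p q : ℝ, IntervalIntegrable (fun t => |(1 - t) ^ α - t ^ α|) volume p q :=
    fun p q => (hcw.abs).intervalIntegrable p q
  have hsplit := integral_add_adjacent_intervals (hI 0 (1/2)) (hI (1/2) 1)
  have hc1 : Continuous (fun t : ℝ => (1 - t) ^ α) :=
    (Real.continuous_rpow_const hα.le).comp (continuous_const.sub continuous_id)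
  have hc2 : Continuous (fun t : ℝ => t ^ α) := Real.continuous_rpow_const hα.le
  have e1 : ∫ t in (0:ℝ)..(1/2), (1 - t) ^ α = ∫ x in (1/2:ℝ)..1, x ^ α := by
    have := integral_comp_sub_left (a := 0) (b := 1/2) (fun s : ℝ => s ^ α) 1
    norm_num at this
    convert this using 2
  have e2 : ∫ t in ((1/2):ℝ)..1, (1 - t) ^ α = ∫ x in (0:ℝ)..(1/2), x ^ α := by
    have := integral_comp_sub_left (a := 1/2) (b := 1) (fun s : ℝ => s ^ α) 1
    norm_num at this
    convert this using 2
  have hrp : ∀ p q : ℝ, ∫ x in p..q, x ^ α = (q ^ (α+1) - p ^ (α+1))/(α+1) :=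
    fun p q => integral_rpow (Or.inl (by linarith))
  have half1 : ∫ t in (0:ℝ)..(1/2), |(1 - t) ^ α - t ^ α| =
      (∫ t in (0:ℝ)..(1/2), (1 - t) ^ α) - ∫ t in (0:ℝ)..(1/2), t ^ α := by
    rw [← integral_sub (hc1.intervalIntegrable 0 (1/2)) (hc2.intervalIntegrable 0 (1/2))]
    apply integral_congr
    intro t ht
    rw [uIcc_of_le (by norm_num : (0:ℝ) ≤ 1/2)] at ht
    show |(1 - t) ^ α - t ^ α| = (1 - t) ^ α - t ^ α
    exact abs_of_nonneg (sub_nonneg.2 (Real.rpow_le_rpow ht.1 (by linarith [ht.2]) hα.le))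
  have half2 : ∫ t in ((1/2):ℝ)..1, |(1 - t) ^ α - t ^ α| =
      (∫ t in ((1/2):ℝ)..1, t ^ α) - ∫ t in ((1/2):ℝ)..1, (1 - t) ^ α := by
    rw [← integral_sub (hc2.intervalIntegrable (1/2) 1) (hc1.intervalIntegrable (1/2) 1)]
    apply integral_congr
    intro t ht
    rw [uIcc_of_le (by norm_num : (1/2:ℝ) ≤ 1)] at ht
    show |(1 - t) ^ α - t ^ α| = t ^ α - (1 - t) ^ α
    rw [abs_sub_comm]
    exact abs_of_nonneg (sub_nonneg.2 (Real.rpow_le_rpow (by linarith [ht.2]) (by linarith [ht.1]) hα.le))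
  rw [← hsplit, half1, half2, e1, e2]
  simp only [hrp]
  have hu : (1/2:ℝ) ^ (α+1) = (1/2:ℝ) ^ α * (1/2) := Real.rpow_add_one (by norm_num) α
  rw [Real.one_rpow, Real.zero_rpow (by linarith), hu]
  have hα1 : α + 1 ≠ 0 := by linarith
  field_simp
  ring

lemma aux_symm {α : ℝ} :
    ∫ t in (0:ℝ)..1, |(1 - t) ^ α - t ^ α| * (1 - t) =
      ∫ t in (0:ℝ)..1, |(1 - t) ^ α - t ^ α| * t := by
  have hs := integral_comp_sub_left (a := 0) (b := 1)
    (fun s : ℝ => |(1 - s) ^ α - s ^ α| * s) 1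
  norm_num at hs
  rw [← hs]
  apply integral_congr
  intro t ht
  show |(1 - t) ^ α - t ^ α| * (1 - t) = |t ^ α - (1 - t) ^ α| * (1 - t)
  rw [abs_sub_comm]

lemma aux_wphi {α A B : ℝ} (hα : 0 < α) :
    ∫ t in (0:ℝ)..1, |(1 - t) ^ α - t ^ α| * ((1 - t) * A + t * B) =
      1/(α+1) * (1 - (1/2:ℝ) ^ α) * (A + B) := by
  have hcw : Continuous (fun t : ℝ => |(1 - t) ^ α - t ^ α|) := (aux_cont_w hα).abs
  have hI1 : IntervalIntegrable (fun t : ℝ => |(1 - t) ^ α - t ^ α| * (1 - t)) volume 0 1 :=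
    (hcw.mul (continuous_const.sub continuous_id)).intervalIntegrable 0 1
  have hI2 : IntervalIntegrable (fun t : ℝ => |(1 - t) ^ α - t ^ α| * t) volume 0 1 :=
    (hcw.mul continuous_id).intervalIntegrable 0 1
  have h1 : ∫ t in (0:ℝ)..1, |(1 - t) ^ α - t ^ α| * ((1 - t) * A + t * B) =
      (∫ t in (0:ℝ)..1, |(1 - t) ^ α - t ^ α| * (1 - t)) * A +
      (∫ t in (0:ℝ)..1, |(1 - t) ^ α - t ^ α| * t) * B := by
    rw [← intervalIntegral.integral_mul_const, ← intervalIntegral.integral_mul_const, ← integral_add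
      (hI1.mul_const A) (hI2.mul_const B)]
    apply integral_congr
    intro t _
    show |(1 - t) ^ α - t ^ α| * ((1 - t) * A + t * B) =
      |(1 - t) ^ α - t ^ α| * (1 - t) * A + |(1 - t) ^ α - t ^ α| * t * B
    ring
  have h2 := aux_symm (α := α)
  have h3 : (∫ t in (0:ℝ)..1, |(1 - t) ^ α - t ^ α| * (1 - t)) +
      (∫ t in (0:ℝ)..1, |(1 - t) ^ α - t ^ α| * t) =
      ∫ t in (0:ℝ)..1, |(1 - t) ^ α - t ^ α| := by
    rw [← integral_add hI1 hI2]
    apply integral_congr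
    intro t _
    show |(1 - t) ^ α - t ^ α| * (1 - t) + |(1 - t) ^ α - t ^ α| * t = |(1 - t) ^ α - t ^ α|
    ring
  have hK := aux_K hα
  have hJ : (∫ t in (0:ℝ)..1, |(1 - t) ^ α - t ^ α| * t) =
      1/(α+1) * (1 - (1/2:ℝ) ^ α) := by
    rw [h2, hK] at h3
    have hα1 : α + 1 ≠ 0 := by linarith
    field_simp at h3 ⊢
    linarith
  rw [h1, h2, hJ]
  ring

end AuxLemmas

open Set in
theorem fractional_estimate_condC_preinvex
    (A : Set ℝ) (η : ℝ → ℝ → ℝ) (a b : ℝ) (f : ℝ → ℝ) (α : ℝ)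
    (hA : IsOpen A) (hinv : InvexSet A η) (hC : CondC A η)
    (ha : a ∈ A) (hb : b ∈ A) (hab : a < a + η b a)
    (hdiff : ∀ x ∈ A, DifferentiableAt ℝ f x)
    (hint : IntervalIntegrable (deriv f) volume a (a + η b a))
    (hpre : PreinvexOn A η (fun x => |deriv f x|))
    (hα : 0 < α) :
    |(f a + f (a + η b a)) / 2 -
        Real.Gamma (α + 1) / (2 * (η b a) ^ α) *
          (JL α a (a + η b a) f + JR α a (a + η b a) f)| ≤
      η b a / (2 * (α + 1)) * (1 - 1 / 2 ^ α) *
        (|deriv f a| + |deriv f (a + η b a)|) := by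
  set h := η b a with hdef
  have hh : 0 < h := by linarith
  -- the segment [a, a+h] is contained in A
  have hsub : Icc a (a + h) ⊆ A := by
    intro x hx
    have ht : (x - a) / h ∈ Icc (0:ℝ) 1 :=
      ⟨div_nonneg (by linarith [hx.1]) hh.le, (div_le_one hh).2 (by linarith [hx.2])⟩
    have := hinv a ha b hb ((x - a) / h) ht
    rw [← hdef] at this
    rwa [show a + (x - a) / h * h = x from by field_simp; ring] at this
  have hd : ∀ x ∈ Icc a (a + h), DifferentiableAt ℝ f x := fun x hx => hdiff x (hsub hx)
  have hc' : a + h ∈ A := hsub ⟨by linarith, le_refl _⟩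
  -- the fundamental identity
  have hid := aux_identity hh hα hd hint
  -- condition C consequence
  have hηac : η a (a + h) = -h := by
    have h1 := (hC b hb a ha 1 ⟨zero_le_one, le_refl 1⟩).1
    rw [hdef]
    simpa using h1
  -- preinvexity bound for |f'| along the segment
  have hbound : ∀ t ∈ Icc (0:ℝ) 1,
      |deriv f (a + t * h)| ≤ (1 - t) * |deriv f a| + t * |deriv f (a + h)| := by
    intro t ht
    have hp := hpre (a + h) hc' a ha (1 - t) ⟨by linarith [ht.2], by linarith [ht.1]⟩
    simp only at hp
    rw [hηac, show a + h + (1 - t) * -h = a + t * h from by ring,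
      show (1:ℝ) - (1 - t) = t from by ring] at hp
    linarith
  -- coefficient computation
  have hΓ := Real.Gamma_add_one hα.ne'
  have hΓpos := Real.Gamma_pos_of_pos hα
  have hpα : (0:ℝ) < h ^ α := Real.rpow_pos_of_pos hh α
  have hcoef : Real.Gamma (α + 1) / (2 * h ^ α) * (JL α a (a + h) f + JR α a (a + h) f) =
      α / 2 * ((∫ t in (0:ℝ)..1, (1 - t) ^ (α - 1) * f (a + t * h)) +
               (∫ t in (0:ℝ)..1, t ^ (α - 1) * f (a + t * h))) := by
    simp only [JL, JR]
    rw [aux_subst_left f hh hα, aux_subst_right f hh hα, hΓ]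
    generalize (∫ t in (0:ℝ)..1, (1 - t) ^ (α - 1) * f (a + t * h)) = I1
    generalize (∫ t in (0:ℝ)..1, t ^ (α - 1) * f (a + t * h)) = I2
    field_simp
  have hexpr : (f a + f (a + h)) / 2 -
      Real.Gamma (α + 1) / (2 * h ^ α) * (JL α a (a + h) f + JR α a (a + h) f) =
      -(h / 2 * ∫ t in (0:ℝ)..1, ((1 - t) ^ α - t ^ α) * deriv f (a + t * h)) := by
    rw [hcoef]
    linear_combination (-1/2 : ℝ) * hid
  rw [hexpr, abs_neg, abs_mul, abs_of_pos (by positivity : (0:ℝ) < h / 2)]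
  -- bound |R|
  have hR1 : |∫ t in (0:ℝ)..1, ((1 - t) ^ α - t ^ α) * deriv f (a + t * h)| ≤
      ∫ t in (0:ℝ)..1, |((1 - t) ^ α - t ^ α) * deriv f (a + t * h)| :=
    abs_integral_le_integral_abs zero_le_one
  have hR1' : ∫ t in (0:ℝ)..1, |((1 - t) ^ α - t ^ α) * deriv f (a + t * h)| =
      ∫ t in (0:ℝ)..1, |(1 - t) ^ α - t ^ α| * |deriv f (a + t * h)| := by
    apply integral_congr
    intro t _
    exact abs_mul _ _
  have hIw : IntervalIntegrable (fun t => |(1 - t) ^ α - t ^ α| * |deriv f (a + t * h)|)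
      volume 0 1 :=
    ((aux_int_deriv hh hint).abs).continuousOn_mul ((aux_cont_w hα).abs.continuousOn)
  have hIφ : IntervalIntegrable (fun t => |(1 - t) ^ α - t ^ α| *
      ((1 - t) * |deriv f a| + t * |deriv f (a + h)|)) volume 0 1 :=
    ((aux_cont_w hα).abs.mul (((continuous_const.sub continuous_id).mul continuous_const).add
      (continuous_id.mul continuous_const))).intervalIntegrable 0 1
  have hR2 : ∫ t in (0:ℝ)..1, |(1 - t) ^ α - t ^ α| * |deriv f (a + t * h)| ≤
      ∫ t in (0:ℝ)..1, |(1 - t) ^ α - t ^ α| *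
        ((1 - t) * |deriv f a| + t * |deriv f (a + h)|) := by
    apply integral_mono_on zero_le_one hIw hIφ
    intro t ht
    exact mul_le_mul_of_nonneg_left (hbound t ht) (abs_nonneg _)
  have hwphi := aux_wphi (A := |deriv f a|) (B := |deriv f (a + h)|) hα
  have hhalf : (1/2:ℝ) ^ α = 1 / 2 ^ α := by
    rw [one_div, one_div, ← Real.inv_rpow (by norm_num : (0:ℝ) ≤ 2)]
  have hRfin : |∫ t in (0:ℝ)..1, ((1 - t) ^ α - t ^ α) * deriv f (a + t * h)| ≤
      1/(α+1) * (1 - (1/2:ℝ) ^ α) * (|deriv f a| + |deriv f (a + h)|) := by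
    calc |∫ t in (0:ℝ)..1, ((1 - t) ^ α - t ^ α) * deriv f (a + t * h)|
        ≤ ∫ t in (0:ℝ)..1, |((1 - t) ^ α - t ^ α) * deriv f (a + t * h)| := hR1
      _ = ∫ t in (0:ℝ)..1, |(1 - t) ^ α - t ^ α| * |deriv f (a + t * h)| := hR1'
      _ ≤ ∫ t in (0:ℝ)..1, |(1 - t) ^ α - t ^ α| *
            ((1 - t) * |deriv f a| + t * |deriv f (a + h)|) := hR2
      _ = 1/(α+1) * (1 - (1/2:ℝ) ^ α) * (|deriv f a| + |deriv f (a + h)|) := hwphi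
  calc h / 2 * |∫ t in (0:ℝ)..1, ((1 - t) ^ α - t ^ α) * deriv f (a + t * h)|
      ≤ h / 2 * (1/(α+1) * (1 - (1/2:ℝ) ^ α) * (|deriv f a| + |deriv f (a + h)|)) :=
        mul_le_mul_of_nonneg_left hRfin (by positivity)
    _ = h / (2 * (α + 1)) * (1 - 1 / 2 ^ α) * (|deriv f a| + |deriv f (a + h)|) := by
        rw [hhalf]; field_simp
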